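/- For μ₁, μ₂ ∈ ℝ, the KL divergence between the Gaussian distributions N(μ₁,1) truncated to [0,∞) and N(μ₂,1) truncated to [0,∞) equals (1/2)(1 − q(ξ))·(μ₁−μ₂)² for some ξ between μ₁ and μ₂, where q(x) = φ(x)²/Φ(x)² + x·φ(x)/Φ(x). In particular KL(TN(μ₁,1;1) ‖ TN(μ₂,1;1)) ≤ (1/2)(μ₁−μ₂)². -/

import Mathlib

open Real MeasureTheory Set Filter

/-- standard normal pdf -/
noncomputable def gaussPdf (x : ℝ) : ℝ :=
  (Real.sqrt (2 * Real.pi))⁻¹ * Real.exp (-x ^ 2 / 2)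

/-- standard normal cdf -/
noncomputable def gaussCdf (x : ℝ) : ℝ := ∫ t in Set.Iic x, gaussPdf t

/-- negative derivative of the inverse Mills ratio -/
noncomputable def millsQ (x : ℝ) : ℝ :=
  gaussPdf x ^ 2 / gaussCdf x ^ 2 + x * gaussPdf x / gaussCdf x

/-- density of the normal distribution `N(μ,1)` truncated to `[0,∞)` -/
noncomputable def tnPdf (μ x : ℝ) : ℝ :=
  if 0 ≤ x then Real.exp (-(x - μ) ^ 2 / 2) / (Real.sqrt (2 * Real.pi) * gaussCdf μ) else 0

/-- KL divergence `KL(TN(μ₁,1;1) ‖ TN(μ₂,1;1))` as the integral of the log density ratio -/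
noncomputable def klTN (μ₁ μ₂ : ℝ) : ℝ :=
  ∫ x in Set.Ici (0 : ℝ), Real.log (tnPdf μ₁ x / tnPdf μ₂ x) * tnPdf μ₁ x

lemma gaussPdf_pos (x : ℝ) : 0 < gaussPdf x := by
  apply mul_pos (inv_pos.2 (Real.sqrt_pos.2 (by positivity))) (exp_pos _)

lemma gaussPdf_even (x : ℝ) : gaussPdf (-x) = gaussPdf x := by
  simp [gaussPdf]

lemma continuous_gaussPdf : Continuous gaussPdf := by
  unfold gaussPdf; fun_prop

lemma gaussPdf_eq (x : ℝ) : gaussPdf x = (Real.sqrt (2 * Real.pi))⁻¹ * Real.exp (-(1/2) * x ^ 2) := by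
  rw [gaussPdf]; ring_nf

lemma integrable_gaussPdf : Integrable gaussPdf := by
  have := (integrable_exp_neg_mul_sq (by norm_num : (0:ℝ) < 1/2)).const_mul (Real.sqrt (2 * Real.pi))⁻¹
  exact this.congr (by filter_upwards with x; rw [gaussPdf_eq])

lemma integral_gaussPdf : ∫ x, gaussPdf x = 1 := by
  simp_rw [gaussPdf_eq]
  rw [MeasureTheory.integral_const_mul, integral_gaussian]
  rw [← Real.sqrt_inv]
  rw [← Real.sqrt_mul (by positivity)]
  field_simp
  ring

lemma integrable_id_gaussPdf : Integrable (fun x => x * gaussPdf x) := by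
  have := (integrable_mul_exp_neg_mul_sq (by norm_num : (0:ℝ) < 1/2)).const_mul (Real.sqrt (2 * Real.pi))⁻¹
  exact this.congr (by filter_upwards with x; rw [gaussPdf_eq]; ring)

lemma hasDerivAt_gaussPdf (x : ℝ) : HasDerivAt gaussPdf (-x * gaussPdf x) x := by
  have h1 : HasDerivAt (fun x : ℝ => -x ^ 2 / 2) (-x) x := by
    have := ((hasDerivAt_pow 2 x).neg).div_const 2
    exact this.congr_deriv (by norm_num; ring)
  have := (h1.exp).const_mul (Real.sqrt (2 * Real.pi))⁻¹
  exact this.congr_deriv (by rw [gaussPdf]; ring)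

lemma tendsto_gaussPdf_atTop : Tendsto gaussPdf atTop (nhds 0) := by
  have h : Tendsto (fun x : ℝ => -x ^ 2 / 2) atTop atBot := by
    apply Tendsto.atBot_div_const (by norm_num : (0:ℝ) < 2)
    exact tendsto_neg_atTop_atBot.comp (tendsto_pow_atTop (by norm_num : 2 ≠ 0))
  have := (Real.tendsto_exp_atBot.comp h).const_mul (Real.sqrt (2 * Real.pi))⁻¹
  unfold gaussPdf
  simpa only [gaussPdf, Function.comp_def, mul_zero] using this

lemma tendsto_gaussPdf_atBot : Tendsto gaussPdf atBot (nhds 0) := by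
  have : Tendsto (fun x : ℝ => gaussPdf (-x)) atBot (nhds 0) :=
    tendsto_gaussPdf_atTop.comp tendsto_neg_atBot_atTop
  unfold gaussPdf
  simpa only [gaussPdf, neg_sq, Function.comp_def] using this

lemma gaussCdf_pos (x : ℝ) : 0 < gaussCdf x := by
  rw [gaussCdf, setIntegral_pos_iff_support_of_nonneg_ae]
  · have : Function.support gaussPdf = univ := by
      ext t; simp [Function.mem_support, (gaussPdf_pos t).ne']
    rw [this, univ_inter]
    simp [Real.volume_Iic]
  · filter_upwards with t using (gaussPdf_pos t).le
  · exact integrable_gaussPdf.integrableOn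

lemma integral_Ioi_gaussPdf (x : ℝ) : ∫ t in Ioi x, gaussPdf t = 1 - gaussCdf x := by
  have : Ioi x = (Iic x)ᶜ := by simp
  rw [this, setIntegral_compl measurableSet_Iic integrable_gaussPdf, integral_gaussPdf, gaussCdf]

lemma gaussCdf_neg (x : ℝ) : gaussCdf (-x) = 1 - gaussCdf x := by
  rw [gaussCdf, ← integral_Ioi_gaussPdf x, ← integral_Ici_eq_integral_Ioi]
  have h1 : MeasurePreserving (fun t : ℝ => -t) volume volume := Measure.measurePreserving_neg _
  have h2 : MeasurableEmbedding (fun t : ℝ => -t) := (Homeomorph.neg ℝ).measurableEmbedding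
  have := h1.setIntegral_preimage_emb h2 gaussPdf (Iic (-x))
  rw [← this]
  have hs : (fun t : ℝ => -t) ⁻¹' Iic (-x) = Ici x := by ext t; simp
  rw [hs]
  exact setIntegral_congr_fun measurableSet_Ici (fun t _ => gaussPdf_even t)

lemma gaussCdf_lt_one (x : ℝ) : gaussCdf x < 1 := by
  have := gaussCdf_pos (-x); rw [gaussCdf_neg] at this; linarith

lemma hasDerivAt_gaussCdf (x : ℝ) : HasDerivAt gaussCdf (gaussPdf x) x := by
  have heq : gaussCdf = fun y => gaussCdf 0 + ∫ t in (0:ℝ)..y, gaussPdf t := by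
    funext y
    rw [← intervalIntegral.integral_Iic_sub_Iic integrable_gaussPdf.integrableOn
      integrable_gaussPdf.integrableOn]
    simp [gaussCdf]
  rw [heq]
  exact (intervalIntegral.integral_hasDerivAt_right
    integrable_gaussPdf.intervalIntegrable
    (continuous_gaussPdf.stronglyMeasurableAtFilter _ _)
    continuous_gaussPdf.continuousAt).const_add _

lemma integral_Iic_id_gaussPdf (x : ℝ) : ∫ t in Iic x, t * gaussPdf t = -gaussPdf x := by
  have := integral_Iic_of_hasDerivAt_of_tendsto' (f := fun t => -gaussPdf t)
    (f' := fun t => t * gaussPdf t) (a := x) (m := 0)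
    (fun t _ => by simpa using (hasDerivAt_gaussPdf t).fun_neg)
    integrable_id_gaussPdf.integrableOn (by simpa using tendsto_gaussPdf_atBot.neg)
  simpa using this

lemma integral_Ioi_id_gaussPdf (x : ℝ) : ∫ t in Ioi x, t * gaussPdf t = gaussPdf x := by
  have := integral_Ioi_of_hasDerivAt_of_tendsto' (f := fun t => -gaussPdf t)
    (f' := fun t => t * gaussPdf t) (a := x) (m := 0)
    (fun t _ => by simpa using (hasDerivAt_gaussPdf t).fun_neg)
    integrable_id_gaussPdf.integrableOn (by simpa using tendsto_gaussPdf_atTop.neg)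
  simpa using this

lemma pdf_add_mul_cdf_nonneg (x : ℝ) : 0 ≤ gaussPdf x + x * gaussCdf x := by
  rcases le_or_gt 0 x with hx | hx
  · have := (gaussCdf_pos x).le
    have := (gaussPdf_pos x).le
    positivity
  · have hmono : ∫ t in Iic x, t * gaussPdf t ≤ ∫ t in Iic x, x * gaussPdf t := by
      apply setIntegral_mono_on integrable_id_gaussPdf.integrableOn
        (integrable_gaussPdf.integrableOn.const_mul x) measurableSet_Iic
      intro t ht
      exact mul_le_mul_of_nonneg_right ht (gaussPdf_pos t).le
    rw [integral_Iic_id_gaussPdf, MeasureTheory.integral_const_mul] at hmono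
    rw [← gaussCdf] at hmono  -- maybe need: gaussCdf x = ∫ t in Iic x, gaussPdf t definitionally
    linarith

lemma millsQ_eq (x : ℝ) :
    millsQ x = gaussPdf x * (gaussPdf x + x * gaussCdf x) / gaussCdf x ^ 2 := by
  have h := (gaussCdf_pos x).ne'
  rw [millsQ]; field_simp

lemma millsQ_nonneg (x : ℝ) : 0 ≤ millsQ x := by
  rw [millsQ_eq]
  have h1 := (gaussPdf_pos x).le
  have h2 := pdf_add_mul_cdf_nonneg x
  positivity

lemma hasDerivAt_mills (x : ℝ) :
    HasDerivAt (fun y => gaussPdf y / gaussCdf y) (-millsQ x) x := by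
  have h := (hasDerivAt_gaussPdf x).div (hasDerivAt_gaussCdf x) (gaussCdf_pos x).ne'
  have := (gaussCdf_pos x).ne'
  exact h.congr_deriv (by rw [millsQ]; field_simp; ring)

lemma hasDerivAt_logCdf (x : ℝ) :
    HasDerivAt (fun y => Real.log (gaussCdf y)) (gaussPdf x / gaussCdf x) x := by
  have := Real.hasDerivAt_log (gaussCdf_pos x).ne'
  have h := (hasDerivAt_gaussCdf x).log (gaussCdf_pos x).ne'
  simpa [div_eq_mul_inv, mul_comm] using h

lemma integral_shift (g : ℝ → ℝ) (c : ℝ) :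
    ∫ x in Ici (0:ℝ), g (x - c) = ∫ y in Ici (-c), g y := by
  have h1 : MeasurePreserving (fun x : ℝ => x - c) volume volume :=
    measurePreserving_sub_right volume c
  have h2 : MeasurableEmbedding (fun x : ℝ => x - c) :=
    (Homeomorph.subRight c).measurableEmbedding
  have := h1.setIntegral_preimage_emb h2 g (Ici (-c))
  rw [← this]
  congr 1
  ext x; simp [sub_eq_add_neg, le_sub_iff_add_le]

lemma tnPdf_eq {μ x : ℝ} (hx : 0 ≤ x) : tnPdf μ x = gaussPdf (x - μ) / gaussCdf μ := by
  rw [tnPdf, if_pos hx, gaussPdf, div_eq_mul_inv, mul_inv, div_eq_mul_inv]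
  ring

lemma integrableOn_gauss_shift (c : ℝ) : IntegrableOn (fun x => gaussPdf (x - c)) (Ici (0:ℝ)) :=
  (integrable_gaussPdf.comp_sub_right c).integrableOn

lemma integrableOn_id_gauss_shift (c : ℝ) :
    IntegrableOn (fun x => x * gaussPdf (x - c)) (Ici (0:ℝ)) := by
  have h : Integrable (fun x : ℝ => x * gaussPdf (x - c)) := by
    have h1 := integrable_id_gaussPdf.comp_sub_right c
    have h2 := (integrable_gaussPdf.comp_sub_right c).const_mul c
    have := h1.add h2
    exact this.congr (by filter_upwards with x; simp; ring)
  exact h.integrableOn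

lemma integral_Ici_gauss_shift (c : ℝ) :
    ∫ x in Ici (0:ℝ), gaussPdf (x - c) = gaussCdf c := by
  rw [integral_shift gaussPdf c, integral_Ici_eq_integral_Ioi, integral_Ioi_gaussPdf,
    gaussCdf_neg]
  ring

lemma integral_Ici_id_gauss_shift (c : ℝ) :
    ∫ x in Ici (0:ℝ), x * gaussPdf (x - c) = gaussPdf c + c * gaussCdf c := by
  have : ∀ x : ℝ, x * gaussPdf (x - c) = (fun y => (y + c) * gaussPdf y) (x - c) := by
    intro x; simp
  rw [funext this] at *
  rw [integral_shift (fun y => (y + c) * gaussPdf y) c]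
  rw [integral_Ici_eq_integral_Ioi]
  have hsplit : ∫ y in Ioi (-c), (y + c) * gaussPdf y
      = (∫ y in Ioi (-c), y * gaussPdf y) + ∫ y in Ioi (-c), c * gaussPdf y := by
    rw [← integral_add (integrable_id_gaussPdf.integrableOn)
      ((integrable_gaussPdf.integrableOn).const_mul c)]
    congr 1; ext y; ring
  rw [hsplit, integral_Ioi_id_gaussPdf, MeasureTheory.integral_const_mul, integral_Ioi_gaussPdf,
    gaussCdf_neg, gaussPdf_even]
  ring

lemma integral_tnPdf (μ : ℝ) : ∫ x in Ici (0:ℝ), tnPdf μ x = 1 := by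
  rw [setIntegral_congr_fun measurableSet_Ici (fun x hx => tnPdf_eq (μ := μ) hx)]
  simp_rw [div_eq_mul_inv, MeasureTheory.integral_mul_const]
  rw [integral_Ici_gauss_shift]
  exact mul_inv_cancel₀ (gaussCdf_pos μ).ne'

lemma integral_id_tnPdf (μ : ℝ) :
    ∫ x in Ici (0:ℝ), x * tnPdf μ x = μ + gaussPdf μ / gaussCdf μ := by
  have : ∀ x ∈ Ici (0:ℝ), x * tnPdf μ x = x * gaussPdf (x - μ) * (gaussCdf μ)⁻¹ := by
    intro x hx; rw [tnPdf_eq hx]; ring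
  rw [setIntegral_congr_fun measurableSet_Ici this, MeasureTheory.integral_mul_const,
    integral_Ici_id_gauss_shift]
  have h := (gaussCdf_pos μ).ne'
  field_simp
  ring

lemma integrableOn_tnPdf (μ : ℝ) : IntegrableOn (tnPdf μ) (Ici (0:ℝ)) := by
  have h : IntegrableOn (fun x => gaussPdf (x - μ) / gaussCdf μ) (Ici (0:ℝ)) :=
    (integrableOn_gauss_shift μ).div_const (gaussCdf μ)
  exact h.congr_fun (fun x hx => (tnPdf_eq hx).symm) measurableSet_Ici

lemma integrableOn_id_tnPdf (μ : ℝ) :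
    IntegrableOn (fun x => x * tnPdf μ x) (Ici (0:ℝ)) := by
  have h : IntegrableOn (fun x => x * gaussPdf (x - μ) / gaussCdf μ) (Ici (0:ℝ)) :=
    (integrableOn_id_gauss_shift μ).div_const (gaussCdf μ)
  exact h.congr_fun (fun x hx => by rw [tnPdf_eq hx]; ring) measurableSet_Ici

lemma log_gaussPdf (y : ℝ) :
    Real.log (gaussPdf y) = -Real.log (Real.sqrt (2 * Real.pi)) + (-y ^ 2 / 2) := by
  have hc : (0:ℝ) < Real.sqrt (2 * Real.pi) := Real.sqrt_pos.2 (by positivity)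
  rw [gaussPdf, Real.log_mul (inv_ne_zero hc.ne') (Real.exp_ne_zero _), Real.log_inv,
    Real.log_exp]

lemma klTN_eq (μ₁ μ₂ : ℝ) :
    klTN μ₁ μ₂ = (μ₁ - μ₂) ^ 2 / 2 + (μ₁ - μ₂) * (gaussPdf μ₁ / gaussCdf μ₁)
      + (Real.log (gaussCdf μ₂) - Real.log (gaussCdf μ₁)) := by
  set C : ℝ := (μ₂ ^ 2 - μ₁ ^ 2) / 2 + Real.log (gaussCdf μ₂) - Real.log (gaussCdf μ₁) with hC
  have key : ∀ x ∈ Ici (0:ℝ), Real.log (tnPdf μ₁ x / tnPdf μ₂ x) * tnPdf μ₁ x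
      = (μ₁ - μ₂) * (x * tnPdf μ₁ x) + C * tnPdf μ₁ x := by
    intro x hx
    have hc : (0:ℝ) < Real.sqrt (2 * Real.pi) := Real.sqrt_pos.2 (by positivity)
    have h1 := gaussCdf_pos μ₁
    have h2 := gaussCdf_pos μ₂
    have hlog : Real.log (tnPdf μ₁ x / tnPdf μ₂ x) = (μ₁ - μ₂) * x + C := by
      rw [tnPdf_eq hx, tnPdf_eq hx]
      rw [Real.log_div (div_pos (gaussPdf_pos _) h1).ne' (div_pos (gaussPdf_pos _) h2).ne',
        Real.log_div (gaussPdf_pos _).ne' h1.ne',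
        Real.log_div (gaussPdf_pos _).ne' h2.ne',
        log_gaussPdf, log_gaussPdf]
      ring
    rw [hlog]; ring
  rw [klTN, setIntegral_congr_fun measurableSet_Ici key]
  rw [integral_add ((integrableOn_id_tnPdf μ₁).const_mul _) ((integrableOn_tnPdf μ₁).const_mul _),
    MeasureTheory.integral_const_mul, MeasureTheory.integral_const_mul,
    integral_id_tnPdf, integral_tnPdf, hC]
  ring

lemma taylor_logCdf (a b : ℝ) :
    ∃ ξ ∈ Set.uIcc a b,
      Real.log (gaussCdf b) - Real.log (gaussCdf a)
        - (gaussPdf a / gaussCdf a) * (b - a) = -(millsQ ξ) / 2 * (b - a) ^ 2 := by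
  rcases eq_or_ne a b with rfl | hab
  · exact ⟨a, left_mem_uIcc, by ring⟩
  set f : ℝ → ℝ := fun t => Real.log (gaussCdf b) - Real.log (gaussCdf t)
    - (gaussPdf t / gaussCdf t) * (b - t) with hf
  set g : ℝ → ℝ := fun t => (b - t) ^ 2 with hg
  have hf' : ∀ t : ℝ, HasDerivAt f ((b - t) * millsQ t) t := by
    intro t
    have h3 : HasDerivAt (fun t : ℝ => b - t) (-1) t := (hasDerivAt_id t).const_sub b
    have h := ((hasDerivAt_logCdf t).const_sub (Real.log (gaussCdf b))).sub
      ((hasDerivAt_mills t).mul h3)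
    exact h.congr_deriv (by ring)
  have hg' : ∀ t : ℝ, HasDerivAt g (-2 * (b - t)) t := by
    intro t
    have h3 : HasDerivAt (fun t : ℝ => b - t) (-1) t := (hasDerivAt_id t).const_sub b
    have := h3.pow 2
    exact this.congr_deriv (by ring)
  have hfb : f b = 0 := by simp [hf]
  have hgb : g b = 0 := by simp [hg]
  rcases hab.lt_or_gt with h | h
  · obtain ⟨c, hc, heq⟩ := exists_ratio_hasDerivAt_eq_ratio_slope f
      (fun t => (b - t) * millsQ t) h
      (fun t _ => (hf' t).continuousAt.continuousWithinAt) (fun t _ => hf' t)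
      g (fun t => -2 * (b - t))
      (fun t _ => (hg' t).continuousAt.continuousWithinAt) (fun t _ => hg' t)
    refine ⟨c, by rw [uIcc_of_le h.le]; exact Ioo_subset_Icc_self hc, ?_⟩
    have hbc : b - c ≠ 0 := sub_ne_zero.2 (ne_of_gt hc.2)
    rw [hfb, hgb] at heq
    have h2 : f a * (b - c) = (-(millsQ c) / 2 * (b - a) ^ 2) * (b - c) := by
      simp only [hg] at heq
      linear_combination (-1/2 : ℝ) * heq
    have h3 : f a = -(millsQ c) / 2 * (b - a) ^ 2 := mul_right_cancel₀ hbc h2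
    simpa [hf] using h3
  · obtain ⟨c, hc, heq⟩ := exists_ratio_hasDerivAt_eq_ratio_slope f
      (fun t => (b - t) * millsQ t) h
      (fun t _ => (hf' t).continuousAt.continuousWithinAt) (fun t _ => hf' t)
      g (fun t => -2 * (b - t))
      (fun t _ => (hg' t).continuousAt.continuousWithinAt) (fun t _ => hg' t)
    refine ⟨c, by rw [uIcc_of_ge h.le]; exact Ioo_subset_Icc_self hc, ?_⟩
    have hbc : b - c ≠ 0 := sub_ne_zero.2 (ne_of_gt hc.1).symm
    rw [hfb, hgb] at heq
    have h2 : f a * (b - c) = (-(millsQ c) / 2 * (b - a) ^ 2) * (b - c) := by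
      simp only [hg] at heq
      linear_combination (1/2 : ℝ) * heq
    have h3 : f a = -(millsQ c) / 2 * (b - a) ^ 2 := mul_right_cancel₀ hbc h2
    simpa [hf] using h3

theorem stmt2 (μ₁ μ₂ : ℝ) :
    (∃ ξ ∈ Set.uIcc μ₁ μ₂,
        klTN μ₁ μ₂ = (1 / 2) * (1 - millsQ ξ) * (μ₁ - μ₂) ^ 2) ∧
      klTN μ₁ μ₂ ≤ (1 / 2) * (μ₁ - μ₂) ^ 2 := by
  obtain ⟨ξ, hξ, htay⟩ := taylor_logCdf μ₁ μ₂
  have hkl := klTN_eq μ₁ μ₂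
  have hmain : klTN μ₁ μ₂ = (1 / 2) * (1 - millsQ ξ) * (μ₁ - μ₂) ^ 2 := by
    rw [hkl]
    linear_combination htay
  refine ⟨⟨ξ, hξ, hmain⟩, ?_⟩
  rw [hmain]
  nlinarith [millsQ_nonneg ξ, sq_nonneg (μ₁ - μ₂)]
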